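/- Let S be a compact subset of {(s_1,...,s_r) ∈ ℂ^r : Re(s_1+...+s_j) > 0 for all j}, and let b = sup_{S} |s_1|. Then the family of functions f_{n_1,...,n_r,k}(s) = (-1)^k \frac{s_1(s_1+1)\cdots(s_1+k)}{(k+1)!} \frac{q^{n_1(s_1+k+1)} q^{n_2 s_2 + ... + n_r s_r}}{[n_1]^{s_1+k+1}[n_2]^{s_2}\cdots[n_r]^{s_r}}, indexed over n_1 > n_2 > ... > n_r ≥ 1 and k ≥ 0, is normally (uniformly absolutely) summable on S. -/

import Mathlib

open Complex

/-- The q-analogue `[n]_q = (1 - q^n)/(1 - q)`. -/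
noncomputable def qNum (q : ℝ) (n : ℕ) : ℝ := (1 - q ^ n) / (1 - q)


lemma rpow_sum' {x : ℝ} (hx : 0 < x) {ι : Type*} (s : Finset ι) (f : ι → ℝ) :
    x ^ (∑ i ∈ s, f i) = ∏ i ∈ s, x ^ f i := by
  induction s using Finset.cons_induction with
  | empty => simp
  | cons a s ha ih => rw [Finset.sum_cons, Finset.prod_cons, Real.rpow_add hx, ih]

lemma abel_bound (δ : ℝ) (hδ : 0 ≤ δ) (σ : ℕ → ℝ) (m : ℕ → ℕ) (r : ℕ) (hr : 1 ≤ r)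
    (hT : ∀ j, j < r → δ ≤ ∑ i ∈ Finset.range (j + 1), σ i)
    (hmono : ∀ j, j + 1 < r → m (j + 1) < m j) (hlast : 1 ≤ m (r - 1)) :
    δ * m 0 ≤ ∑ i ∈ Finset.range r, (m i : ℝ) * σ i := by
  have hby := Finset.sum_range_by_parts (fun i => (m i : ℝ)) σ r
  simp only [smul_eq_mul] at hby
  set T : ℕ → ℝ := fun j => ∑ i ∈ Finset.range (j + 1), σ i with hTdef
  have hr1 : r - 1 + 1 = r := by omega
  have h1 : ∀ i ∈ Finset.range (r - 1),
      ((m i : ℝ) - m (i + 1)) * δ ≤ ((m i : ℝ) - m (i + 1)) * T i := by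
    intro i hi
    have hi' : i + 1 < r := by
      have := Finset.mem_range.1 hi; omega
    have hd : (0:ℝ) ≤ (m i : ℝ) - m (i + 1) :=
      sub_nonneg.2 (by exact_mod_cast (hmono i hi').le)
    exact mul_le_mul_of_nonneg_left (hT i (by omega)) hd
  have h2 : ∑ i ∈ Finset.range (r - 1), ((m i : ℝ) - m (i + 1)) = (m 0 : ℝ) - m (r - 1) :=
    Finset.sum_range_sub' (fun i => (m i : ℝ)) (r - 1)
  have h3 : (m (r-1) : ℝ) * δ ≤ (m (r-1) : ℝ) * T (r - 1) :=
    mul_le_mul_of_nonneg_left (hT (r-1) (by omega)) (by positivity)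
  have h4 : ∑ i ∈ Finset.range r, (m i : ℝ) * σ i
      = (m (r-1) : ℝ) * T (r-1) + ∑ i ∈ Finset.range (r - 1), ((m i : ℝ) - m (i+1)) * T i := by
    rw [hby, show (∑ i ∈ Finset.range r, σ i) = T (r-1) from by rw [hTdef]; simp [hr1],
      sub_eq_add_neg, ← Finset.sum_neg_distrib]
    congr 1
    apply Finset.sum_congr rfl; intro i _; ring
  have h5 : ∑ i ∈ Finset.range (r-1), ((m i : ℝ) - m (i+1)) * δ = ((m 0 : ℝ) - m (r-1)) * δ := by
    rw [← Finset.sum_mul, h2]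
  have h6 : ∑ i ∈ Finset.range (r-1), ((m i : ℝ) - m (i+1)) * δ
      ≤ ∑ i ∈ Finset.range (r-1), ((m i : ℝ) - m (i+1)) * T i := Finset.sum_le_sum h1
  rw [h4]
  nlinarith [h3, h6, h5]

set_option maxHeartbeats 1000000 in
lemma summable_pi_geom (ρ : ℝ) (h0 : 0 ≤ ρ) (h1 : ρ < 1) (m : ℕ) :
    Summable (fun n : Fin m → ℕ => ρ ^ (∑ i, n i)) := by
  induction m with
  | zero => exact Summable.of_finite
  | succ m IH =>
    have hg : Summable (fun a : ℕ => ρ ^ a) := summable_geometric_of_lt_one h0 h1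
    have h0f : (0 : ℕ → ℝ) ≤ (fun a : ℕ => ρ ^ a) := fun a => pow_nonneg h0 a
    have h0g : (0 : (Fin m → ℕ) → ℝ) ≤ (fun n : Fin m → ℕ => ρ ^ (∑ i, n i)) :=
      fun n => pow_nonneg h0 _
    have hprod := hg.mul_of_nonneg IH h0f h0g
    apply (Equiv.summable_iff (Fin.consEquiv (fun _ : Fin (m+1) => ℕ))).mp
    refine hprod.congr fun p => ?_
    simp [Fin.consEquiv, Fin.sum_cons, pow_add]

lemma summable_A (b q : ℝ) (hb : 0 ≤ b) (hq0 : 0 ≤ q) (hq1 : q < 1) :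
    Summable (fun k : ℕ =>
      (∏ i ∈ Finset.range (k + 1), (b + i)) / ((k + 1).factorial : ℝ) * q ^ (k + 1)) := by
  set f : ℕ → ℝ := fun k =>
    (∏ i ∈ Finset.range (k + 1), (b + i)) / ((k + 1).factorial : ℝ) * q ^ (k + 1) with hf
  have hfpos : ∀ k, 0 ≤ f k := by
    intro k
    apply mul_nonneg (div_nonneg (Finset.prod_nonneg fun i _ => by positivity) (by positivity))
    positivity
  have hstep : ∀ k : ℕ, f (k + 1) = f k * ((b + (k + 1)) * q / ((k : ℝ) + 2)) := by
    intro k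
    rw [hf]
    simp only [Finset.prod_range_succ, Nat.factorial_succ, pow_succ]
    push_cast
    have h3 : ((k.factorial : ℝ)) ≠ 0 := Nat.cast_ne_zero.2 k.factorial_ne_zero
    field_simp
    ring
  apply summable_of_ratio_norm_eventually_le (r := (1 + q) / 2) (by linarith)
  rw [Filter.eventually_atTop]
  refine ⟨⌈2 * q * b / (1 - q)⌉₊, fun k hk => ?_⟩
  have hk' : 2 * q * b / (1 - q) ≤ (k : ℝ) :=
    le_trans (Nat.le_ceil _) (by exact_mod_cast hk)
  have h1q : (0:ℝ) < 1 - q := by linarith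
  have hqb : 2 * q * b ≤ (k : ℝ) * (1 - q) := by
    rw [div_le_iff₀ h1q] at hk'; linarith
  have hx : (b + (k + 1)) * q / ((k : ℝ) + 2) ≤ (1 + q) / 2 := by
    rw [div_le_iff₀ (by positivity)]
    nlinarith
  rw [Real.norm_of_nonneg (hfpos _), Real.norm_of_nonneg (hfpos _), hstep]
  calc f k * ((b + (k + 1)) * q / ((k : ℝ) + 2)) ≤ f k * ((1 + q) / 2) :=
        mul_le_mul_of_nonneg_left hx (hfpos k)
    _ = (1 + q) / 2 * f k := by ring

theorem point_bound (q : ℝ) (hq0 : 0 < q) (hq1 : q < 1) (r : ℕ) (hr : 2 ≤ r)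
    (δ R b : ℝ) (hδ : 0 < δ) (hR0 : 0 ≤ R) (hb0 : 0 ≤ b)
    (m : Fin r → ℕ) (hm1 : ∀ i j : Fin r, i < j → m j < m i) (hm2 : ∀ i, 1 ≤ m i)
    (k : ℕ) (s : Fin r → ℂ)
    (hsb : ‖s (⟨0, by linarith⟩ : Fin r)‖ ≤ b)
    (hsR : ∀ i : Fin r, |(s i).re| ≤ R)
    (hsδ : ∀ j : Fin r, δ ≤ (∑ i ∈ Finset.univ.filter (· ≤ j), s i).re) :
    ‖(-1 : ℂ) ^ k *
        (∏ i ∈ Finset.range (k + 1), (s (⟨0, by linarith⟩ : Fin r) + (i : ℂ))) /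
        ((k + 1).factorial : ℂ) *
        ∏ i : Fin r, ((q ^ (m i) / qNum q (m i) : ℝ) : ℂ) ^
          (if i = (⟨0, by linarith⟩ : Fin r) then s (⟨0, by linarith⟩ : Fin r) + (k : ℂ) + 1 else s i)‖
    ≤ ((1 - q) ^ (-(r * R) : ℝ) * (q ^ (δ / r : ℝ)) ^ (∑ i, m i)) *
        ((∏ i ∈ Finset.range (k + 1), (b + i)) / ((k + 1).factorial : ℝ) * q ^ (k + 1)) := by
  have hq01 : (0:ℝ) < 1 - q := by linarith
  set z : Fin r := ⟨0, by linarith⟩ with hzdef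
  set t : Fin r → ℝ := fun i => q ^ (m i) / qNum q (m i) with htdef
  set σ : Fin r → ℝ := fun i => (s i).re with hσdef
  -- basic facts about t
  have hqpow_lt1 : ∀ i : Fin r, q ^ (m i) < 1 := fun i =>
    pow_lt_one₀ hq0.le hq1 (by have := hm2 i; omega)
  have hqpow_le_q : ∀ i : Fin r, q ^ (m i) ≤ q := by
    intro i
    have h := pow_le_pow_of_le_one hq0.le hq1.le (hm2 i)
    rwa [pow_one] at h
  have hqn_pos : ∀ i : Fin r, 0 < qNum q (m i) := by
    intro i
    exact div_pos (by linarith [hqpow_lt1 i]) hq01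
  have hqn_ge1 : ∀ i : Fin r, 1 ≤ qNum q (m i) := by
    intro i
    rw [qNum, one_le_div hq01]
    linarith [hqpow_le_q i]
  have ht_pos : ∀ i : Fin r, 0 < t i := fun i => div_pos (pow_pos hq0 _) (hqn_pos i)
  have ht_le_pow : ∀ i : Fin r, t i ≤ q ^ (m i) := fun i =>
    div_le_self (pow_nonneg hq0.le _) (hqn_ge1 i)
  have ht_le_q : ∀ i : Fin r, t i ≤ q := fun i => le_trans (ht_le_pow i) (hqpow_le_q i)
  have ht_ge : ∀ i : Fin r, (1 - q) * q ^ (m i) ≤ t i := by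
    intro i
    rw [htdef]
    have h1 : qNum q (m i) ≤ 1 / (1 - q) := by
      rw [qNum, div_le_div_iff₀ hq01 hq01]
      nlinarith [pow_pos hq0 (m i)]
    calc (1 - q) * q ^ (m i) = q ^ (m i) / (1 / (1 - q)) := by
          field_simp
      _ ≤ q ^ (m i) / qNum q (m i) := by
          apply div_le_div_of_nonneg_left (pow_nonneg hq0.le _) (hqn_pos i) h1
  -- norm computation
  have hfacpos : (0:ℝ) < ((k + 1).factorial : ℝ) := by
    exact_mod_cast Nat.factorial_pos (k+1)
  have hnorm : ‖(-1 : ℂ) ^ k *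
        (∏ i ∈ Finset.range (k + 1), (s z + (i : ℂ))) / ((k + 1).factorial : ℂ) *
        ∏ i : Fin r, ((t i : ℝ) : ℂ) ^ (if i = z then s z + (k : ℂ) + 1 else s i)‖
      = (∏ i ∈ Finset.range (k + 1), ‖s z + (i : ℂ)‖) / ((k + 1).factorial : ℝ) *
        ∏ i : Fin r, t i ^ ((if i = z then s z + (k : ℂ) + 1 else s i).re) := by
    rw [norm_mul, norm_div, norm_mul, norm_pow, norm_neg, norm_one, one_pow, one_mul,
      norm_prod, norm_prod]
    congr 1
    · congr 1
      exact Complex.norm_natCast _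
    · apply Finset.prod_congr rfl
      intro i _
      rw [Complex.norm_cpow_eq_rpow_re_of_pos (ht_pos i)]
  -- bound on the numerator product
  have hnum : (∏ i ∈ Finset.range (k + 1), ‖s z + (i : ℂ)‖)
      ≤ ∏ i ∈ Finset.range (k + 1), (b + i) := by
    apply Finset.prod_le_prod (fun i _ => norm_nonneg _)
    intro i _
    calc ‖s z + (i : ℂ)‖ ≤ ‖s z‖ + ‖(i : ℂ)‖ := norm_add_le _ _
      _ ≤ b + i := by
          apply add_le_add hsb
          simp
  -- splitting the exponent product
  have hsplit : ∏ i : Fin r, t i ^ ((if i = z then s z + (k : ℂ) + 1 else s i).re)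
      = t z ^ ((k : ℝ) + 1) * ∏ i : Fin r, t i ^ σ i := by
    have hez : ((if z = z then s z + (k : ℂ) + 1 else s z).re) = ((k : ℝ) + 1) + σ z := by
      simp [hσdef]
      ring
    calc ∏ i : Fin r, t i ^ ((if i = z then s z + (k : ℂ) + 1 else s i).re)
        = t z ^ ((if z = z then s z + (k : ℂ) + 1 else s z).re) *
          ∏ i ∈ Finset.univ.erase z, t i ^ ((if i = z then s z + (k : ℂ) + 1 else s i).re) :=
          (Finset.mul_prod_erase Finset.univ _ (Finset.mem_univ z)).symm
      _ = (t z ^ ((k : ℝ) + 1) * t z ^ σ z) * ∏ i ∈ Finset.univ.erase z, t i ^ σ i := by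
          rw [hez, Real.rpow_add (ht_pos z)]
          congr 1
          apply Finset.prod_congr rfl
          intro i hi
          rw [if_neg (Finset.ne_of_mem_erase hi)]
      _ = t z ^ ((k : ℝ) + 1) * ∏ i : Fin r, t i ^ σ i := by
          rw [mul_assoc, Finset.mul_prod_erase Finset.univ (fun i => t i ^ σ i)
            (Finset.mem_univ z)]
  -- bound t z ^ (k+1)
  have hCz : t z ^ ((k : ℝ) + 1) ≤ q ^ (k + 1) := by
    have h1 : t z ^ ((k : ℝ) + 1) = t z ^ (k + 1 : ℕ) := by
      rw [← Real.rpow_natCast (t z) (k+1)]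
      norm_num
    rw [h1]
    exact pow_le_pow_left₀ (ht_pos z).le (ht_le_q z) (k+1)
  -- bound the sigma-product
  have hD1 : ∀ i : Fin r, t i ^ σ i ≤ (1 - q) ^ (-|σ i| : ℝ) * q ^ ((m i : ℝ) * σ i) := by
    intro i
    have hq_rpow : ((q : ℝ) ^ (m i)) ^ (σ i : ℝ) = q ^ ((m i : ℝ) * σ i) := by
      rw [← Real.rpow_natCast q (m i), ← Real.rpow_mul hq0.le]
    rcases le_or_gt 0 (σ i) with h | h
    · have h1 : t i ^ σ i ≤ ((q : ℝ) ^ (m i)) ^ (σ i : ℝ) :=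
        Real.rpow_le_rpow (ht_pos i).le (ht_le_pow i) h
      have h3 : (1:ℝ) ≤ (1 - q) ^ (-|σ i| : ℝ) :=
        Real.one_le_rpow_of_pos_of_le_one_of_nonpos hq01 (by linarith)
          (neg_nonpos.2 (abs_nonneg _))
      calc t i ^ σ i ≤ q ^ ((m i : ℝ) * σ i) := by rw [← hq_rpow]; exact h1
        _ ≤ (1 - q) ^ (-|σ i| : ℝ) * q ^ ((m i : ℝ) * σ i) :=
            le_mul_of_one_le_left (Real.rpow_nonneg hq0.le _) h3
    · have habs : (-|σ i| : ℝ) = σ i := by rw [abs_of_neg h]; ring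
      have h1 : t i ^ σ i ≤ ((1 - q) * q ^ (m i)) ^ (σ i : ℝ) :=
        Real.rpow_le_rpow_of_nonpos (by positivity) (ht_ge i) h.le
      calc t i ^ σ i ≤ ((1 - q) * q ^ (m i)) ^ (σ i : ℝ) := h1
        _ = (1 - q) ^ (-|σ i| : ℝ) * q ^ ((m i : ℝ) * σ i) := by
            rw [Real.mul_rpow hq01.le (pow_nonneg hq0.le _), habs, hq_rpow]
  have hD2 : ∏ i : Fin r, t i ^ σ i
      ≤ (1 - q) ^ (-(∑ i : Fin r, |σ i|) : ℝ) * q ^ (∑ i : Fin r, (m i : ℝ) * σ i) := by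
    calc ∏ i : Fin r, t i ^ σ i
        ≤ ∏ i : Fin r, ((1 - q) ^ (-|σ i| : ℝ) * q ^ ((m i : ℝ) * σ i)) :=
          Finset.prod_le_prod (fun i _ => Real.rpow_nonneg (ht_pos i).le _) (fun i _ => hD1 i)
      _ = (∏ i : Fin r, (1 - q) ^ (-|σ i| : ℝ)) * ∏ i : Fin r, q ^ ((m i : ℝ) * σ i) :=
          Finset.prod_mul_distrib
      _ = (1 - q) ^ (-(∑ i : Fin r, |σ i|) : ℝ) * q ^ (∑ i : Fin r, (m i : ℝ) * σ i) := by
          rw [← rpow_sum' hq01, ← rpow_sum' hq0, ← Finset.sum_neg_distrib]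
  have habssum : (∑ i : Fin r, |σ i|) ≤ r * R := by
    calc (∑ i : Fin r, |σ i|) ≤ ∑ _i : Fin r, R := Finset.sum_le_sum (fun i _ => hsR i)
      _ = r * R := by
        rw [Finset.sum_const, Finset.card_univ, Fintype.card_fin, nsmul_eq_mul]
  have hD3 : (1 - q) ^ (-(∑ i : Fin r, |σ i|) : ℝ) ≤ (1 - q) ^ (-(r * R) : ℝ) :=
    Real.rpow_le_rpow_of_exponent_ge hq01 (by linarith) (neg_le_neg habssum)
  -- Abel-type bound
  set mm : ℕ → ℕ := fun j => if h : j < r then m ⟨j, h⟩ else 0 with hmm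
  set σσ : ℕ → ℝ := fun j => if h : j < r then σ ⟨j, h⟩ else 0 with hσσ
  have h0r : 0 < r := by omega
  have habel : δ * (m z) ≤ ∑ i : Fin r, (m i : ℝ) * σ i := by
    have hmm0 : mm 0 = m z := by rw [hmm]; simp only [dif_pos h0r]; rfl
    have hT : ∀ j, j < r → δ ≤ ∑ i ∈ Finset.range (j + 1), σσ i := by
      intro j hj
      refine le_trans (hsδ ⟨j, hj⟩) (le_of_eq ?_)
      rw [Complex.re_sum, Finset.sum_filter]
      calc ∑ i : Fin r, (if i ≤ (⟨j, hj⟩ : Fin r) then (s i).re else 0)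
          = ∑ i : Fin r, (fun a => if a < j + 1 then σσ a else 0) (i : ℕ) := by
            apply Finset.sum_congr rfl
            intro i _
            have hiff : i ≤ (⟨j, hj⟩ : Fin r) ↔ (i : ℕ) < j + 1 := by
              simp only [Fin.le_def, Fin.val_mk]
              omega
            by_cases hij : (i : ℕ) < j + 1
            · simp only [if_pos hij, if_pos (hiff.2 hij), hσσ, dif_pos i.isLt, Fin.eta, hσdef]
            · simp only [if_neg hij, if_neg (fun h => hij (hiff.1 h))]
        _ = ∑ a ∈ Finset.range r, (if a < j + 1 then σσ a else 0) :=
            Fin.sum_univ_eq_sum_range (fun a => if a < j + 1 then σσ a else 0) r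
        _ = ∑ a ∈ Finset.range (j + 1), σσ a := by
            rw [← Finset.sum_filter]
            apply Finset.sum_congr _ (fun x _ => rfl)
            ext a
            simp only [Finset.mem_filter, Finset.mem_range]
            omega
    have hmono' : ∀ j, j + 1 < r → mm (j + 1) < mm j := by
      intro j hj
      rw [hmm]
      simp only [dif_pos hj, dif_pos (show j < r by omega)]
      exact hm1 ⟨j, by omega⟩ ⟨j + 1, hj⟩ (by simp [Fin.lt_def])
    have hlast : 1 ≤ mm (r - 1) := by
      rw [hmm]; simp only [dif_pos (show r - 1 < r by omega)]; exact hm2 _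
    have habel' := abel_bound δ hδ.le σσ mm r (by omega) hT hmono' hlast
    rw [hmm0] at habel'
    refine le_trans habel' (le_of_eq ?_)
    rw [← Fin.sum_univ_eq_sum_range (fun j => (mm j : ℝ) * σσ j) r]
    apply Finset.sum_congr rfl
    intro i _
    simp only [hmm, hσσ, dif_pos i.isLt, Fin.eta]
  have hsum_le : q ^ (∑ i : Fin r, (m i : ℝ) * σ i) ≤ (q ^ (δ / r : ℝ)) ^ (∑ i, m i) := by
    have hmz : ∀ i, m i ≤ m z := by
      intro i
      rcases eq_or_lt_of_le (show z ≤ i from by rw [Fin.le_def]; exact Nat.zero_le _) with h | h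
      · rw [← h]
      · exact (hm1 z i h).le
    have hsum : (∑ i, m i : ℕ) ≤ r * m z := by
      calc (∑ i, m i) ≤ ∑ _i : Fin r, m z := Finset.sum_le_sum fun i _ => hmz i
        _ = r * m z := by rw [Finset.sum_const, Finset.card_univ, Fintype.card_fin, smul_eq_mul]
    have hexp : (δ / r) * ((∑ i, m i : ℕ) : ℝ) ≤ ∑ i : Fin r, (m i : ℝ) * σ i := by
      refine le_trans ?_ habel
      rw [div_mul_eq_mul_div, div_le_iff₀ (by positivity : (0:ℝ) < (r:ℝ))]
      have hc : ((∑ i, m i : ℕ) : ℝ) ≤ (r : ℝ) * (m z) := by exact_mod_cast hsum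
      nlinarith [hδ.le]
    calc q ^ (∑ i : Fin r, (m i : ℝ) * σ i) ≤ q ^ ((δ / r) * ((∑ i, m i : ℕ) : ℝ)) :=
          Real.rpow_le_rpow_of_exponent_ge hq0 hq1.le hexp
      _ = (q ^ (δ / r : ℝ)) ^ ((∑ i, m i : ℕ) : ℝ) := Real.rpow_mul hq0.le _ _
      _ = (q ^ (δ / r : ℝ)) ^ (∑ i, m i) := Real.rpow_natCast _ _
  -- final combination
  rw [hnorm, hsplit]
  have hP : t z ^ ((k : ℝ) + 1) * ∏ i : Fin r, t i ^ σ i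
      ≤ q ^ (k + 1) * ((1 - q) ^ (-(r * R) : ℝ) * (q ^ (δ / r : ℝ)) ^ (∑ i, m i)) := by
    apply mul_le_mul hCz ?_
      (Finset.prod_nonneg fun i _ => Real.rpow_nonneg (ht_pos i).le _) (by positivity)
    calc ∏ i : Fin r, t i ^ σ i
        ≤ (1 - q) ^ (-(∑ i : Fin r, |σ i|) : ℝ) * q ^ (∑ i : Fin r, (m i : ℝ) * σ i) := hD2
      _ ≤ (1 - q) ^ (-(r * R) : ℝ) * (q ^ (δ / r : ℝ)) ^ (∑ i, m i) :=
          mul_le_mul hD3 hsum_le (Real.rpow_nonneg hq0.le _) (Real.rpow_nonneg hq01.le _)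
  refine le_trans (mul_le_mul ((div_le_div_iff_of_pos_right hfacpos).2 hnum) hP
    (mul_nonneg (Real.rpow_nonneg (ht_pos z).le _)
      (Finset.prod_nonneg fun i _ => Real.rpow_nonneg (ht_pos i).le _))
    (div_nonneg (Finset.prod_nonneg fun i _ => by positivity) hfacpos.le)) (le_of_eq (by ring))

set_option maxHeartbeats 1000000 in
theorem normally_summable_on_compact (q : ℝ) (hq0 : 0 < q) (hq1 : q < 1)
    (r : ℕ) (hr : 2 ≤ r) (S : Set (Fin r → ℂ)) (hS : IsCompact S)
    (hSU : ∀ s ∈ S, ∀ j : Fin r, 0 < (∑ i ∈ Finset.univ.filter (· ≤ j), s i).re)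
    (b : ℝ) (hb : IsLUB {x : ℝ | ∃ s ∈ S, x = ‖s (⟨0, by omega⟩ : Fin r)‖} b) :
    Summable (fun nk :
        {n : Fin r → ℕ // (∀ i j : Fin r, i < j → n j < n i) ∧ ∀ i, 1 ≤ n i} × ℕ =>
      ⨆ s : S, ‖(-1 : ℂ) ^ nk.2 *
          (∏ i ∈ Finset.range (nk.2 + 1), (s.1 (⟨0, by omega⟩ : Fin r) + (i : ℂ))) /
          ((nk.2 + 1).factorial : ℂ) *
          ∏ i : Fin r, ((q ^ (nk.1.1 i) / qNum q (nk.1.1 i) : ℝ) : ℂ) ^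
            (if i = (⟨0, by omega⟩ : Fin r) then s.1 (⟨0, by omega⟩ : Fin r) + (nk.2 : ℂ) + 1 else s.1 i)‖) := by
  classical
  have hq01 : (0:ℝ) < 1 - q := by linarith
  -- S is nonempty
  have hne : S.Nonempty := by
    rcases Set.eq_empty_or_nonempty S with h | h
    · exfalso
      have hub : (b - 1) ∈ upperBounds {x : ℝ | ∃ s ∈ S, x = ‖s (⟨0, by omega⟩ : Fin r)‖} := by
        rintro x ⟨s, hs, -⟩
        exact absurd hs (by simp [h])
      linarith [hb.2 hub]
    · exact h
  obtain ⟨s₀, hs₀⟩ := hne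
  haveI hSne : Nonempty S := ⟨⟨s₀, hs₀⟩⟩
  have hb0 : 0 ≤ b := le_trans (norm_nonneg (s₀ (⟨0, by omega⟩ : Fin r))) (hb.1 ⟨s₀, hs₀, rfl⟩)
  have hbub : ∀ s ∈ S, ‖s (⟨0, by omega⟩ : Fin r)‖ ≤ b := fun s hs => hb.1 ⟨s, hs, rfl⟩
  -- uniform bound on real parts
  obtain ⟨R, hR⟩ := hS.isBounded.exists_norm_le
  have hR0 : 0 ≤ R := le_trans (norm_nonneg _) (hR s₀ hs₀)
  have hRre : ∀ s ∈ S, ∀ i : Fin r, |(s i).re| ≤ R := by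
    intro s hs i
    calc |(s i).re| ≤ ‖s i‖ := Complex.abs_re_le_norm (s i)
      _ ≤ ‖s‖ := norm_le_pi_norm s i
      _ ≤ R := hR s hs
  -- uniform positive lower bound on partial sums
  have hmin : ∀ j : Fin r, ∃ d : ℝ, 0 < d ∧ ∀ s ∈ S,
      d ≤ (∑ i ∈ Finset.univ.filter (· ≤ j), s i).re := by
    intro j
    have hcont : ContinuousOn
        (fun s : Fin r → ℂ => (∑ i ∈ Finset.univ.filter (· ≤ j), s i).re) S := by
      apply Continuous.continuousOn
      fun_prop
    obtain ⟨d, hd0, hd⟩ := hS.exists_forall_le' hcont (fun s hs => hSU s hs j)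
    exact ⟨d, hd0, hd⟩
  choose δf hδfpos hδfle using hmin
  haveI : Nonempty (Fin r) := ⟨⟨0, by omega⟩⟩
  set δ : ℝ := Finset.univ.inf' Finset.univ_nonempty δf with hδdef
  have hδpos : 0 < δ := (Finset.lt_inf'_iff _).2 (fun j _ => hδfpos j)
  have hδle : ∀ s ∈ S, ∀ j : Fin r, δ ≤ (∑ i ∈ Finset.univ.filter (· ≤ j), s i).re :=
    fun s hs j => le_trans (Finset.inf'_le _ (Finset.mem_univ j)) (hδfle j s hs)
  -- the comparison family
  set ρ : ℝ := q ^ (δ / r : ℝ) with hρdef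
  have hρpos : 0 < ρ := Real.rpow_pos_of_pos hq0 _
  have hρlt : ρ < 1 := Real.rpow_lt_one hq0.le hq1 (by positivity)
  set M : ℝ := (1 - q) ^ (-(r * R) : ℝ) with hMdef
  have hMpos : 0 < M := Real.rpow_pos_of_pos hq01 _
  have hgsum : Summable (fun nk :
      {n : Fin r → ℕ // (∀ i j : Fin r, i < j → n j < n i) ∧ ∀ i, 1 ≤ n i} × ℕ =>
      (M * ρ ^ (∑ i, nk.1.1 i)) *
        ((∏ i ∈ Finset.range (nk.2 + 1), (b + i)) / ((nk.2 + 1).factorial : ℝ) *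
          q ^ (nk.2 + 1))) := by
    have hF : Summable (fun n : Fin r → ℕ => M * ρ ^ (∑ i, n i)) :=
      (summable_pi_geom ρ hρpos.le hρlt r).mul_left M
    have hFsub : Summable (fun n :
        {n : Fin r → ℕ // (∀ i j : Fin r, i < j → n j < n i) ∧ ∀ i, 1 ≤ n i} =>
        M * ρ ^ (∑ i, n.1 i)) :=
      hF.comp_injective Subtype.val_injective
    have hG := summable_A b q hb0 hq0.le hq1
    have h0F : (0 : {n : Fin r → ℕ // (∀ i j : Fin r, i < j → n j < n i) ∧ ∀ i, 1 ≤ n i} → ℝ)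
        ≤ (fun n => M * ρ ^ (∑ i, n.1 i)) := fun n => by positivity
    have h0G : (0 : ℕ → ℝ) ≤ (fun k : ℕ =>
        (∏ i ∈ Finset.range (k + 1), (b + i)) / ((k + 1).factorial : ℝ) * q ^ (k + 1)) := by
      intro k
      have : (0:ℝ) ≤ ∏ i ∈ Finset.range (k + 1), (b + i) :=
        Finset.prod_nonneg fun i _ => by positivity
      positivity
    exact Summable.congr (hFsub.mul_of_nonneg hG h0F h0G) (fun nk => rfl)
  refine Summable.of_nonneg_of_le (fun nk => Real.iSup_nonneg fun s => norm_nonneg _)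
    (fun nk => ?_) hgsum
  apply ciSup_le
  intro s
  have hpb := point_bound q hq0 hq1 r hr δ R b hδpos hR0 hb0 nk.1.1 nk.1.2.1 nk.1.2.2 nk.2
    s.1 (hbub s.1 s.2) (fun i => hRre s.1 s.2 i) (fun j => hδle s.1 s.2 j)
  exact hpb
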